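/- Let d₁, d₂ ∈ ℂ^N be unit vectors with r = |⟨d₂, d₁⟩| < 1, and let φ ∈ ℝ be such that ⟨d₂, d₁⟩ = r e^{iφ}. Let q ∈ [0, 1] and define c₂ = √((1−q)/(1−r²)) and c₁ = (r c₂ − √q) e^{i(π−φ)}, and z° = c₁ d₁ + c₂ d₂. Then ‖z°‖ = 1, |⟨d₁, z°⟩|² = q, and |⟨d₂, z°⟩|² = 1 − (r√(1−q) − √((1−r²)q))². In particular, z° attains the maximum of |⟨d₂, z⟩|² over unit vectors z with |⟨d₁, z⟩|² = q. -/

import Mathlib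

open Complex


/-- For unit vectors `d₁, d₂ ∈ ℂ^N` with `r = |⟨d₂, d₁⟩| < 1`,
`⟨d₂, d₁⟩ = r e^{iφ}`, `q ∈ [0,1]`, `c₂ = √((1−q)/(1−r²))`,
`c₁ = (r c₂ − √q) e^{i(π−φ)}` and `z° = c₁ d₁ + c₂ d₂`, one has `‖z°‖ = 1`,
`|⟨d₁, z°⟩|² = q`, `|⟨d₂, z°⟩|² = 1 − (r√(1−q) − √((1−r²)q))²`, and `z°` maximizes
`|⟨d₂, z⟩|²` over unit vectors `z` with `|⟨d₁, z⟩|² = q`. -/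
theorem stmt4 {N : ℕ} (d₁ d₂ : EuclideanSpace ℂ (Fin N))
    (hd₁ : ‖d₁‖ = 1) (hd₂ : ‖d₂‖ = 1)
    (r φ : ℝ) (hr : r = ‖(inner ℂ d₂ d₁ : ℂ)‖) (hrlt : r < 1)
    (hφ : (inner ℂ d₂ d₁ : ℂ) = (r : ℂ) * Complex.exp (Complex.I * (φ : ℂ)))
    (q : ℝ) (hq0 : 0 ≤ q) (hq1 : q ≤ 1)
    (c₂ : ℝ) (hc₂ : c₂ = Real.sqrt ((1 - q) / (1 - r ^ 2)))
    (c₁ : ℂ) (hc₁ : c₁ = ((r * c₂ - Real.sqrt q : ℝ) : ℂ) *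
      Complex.exp (Complex.I * ((Real.pi - φ : ℝ) : ℂ)))
    (z : EuclideanSpace ℂ (Fin N)) (hzdef : z = c₁ • d₁ + (c₂ : ℂ) • d₂) :
    ‖z‖ = 1 ∧
    ‖(inner ℂ d₁ z : ℂ)‖ ^ 2 = q ∧
    ‖(inner ℂ d₂ z : ℂ)‖ ^ 2 =
      1 - (r * Real.sqrt (1 - q) - Real.sqrt ((1 - r ^ 2) * q)) ^ 2 ∧
    ∀ y : EuclideanSpace ℂ (Fin N), ‖y‖ = 1 → ‖(inner ℂ d₁ y : ℂ)‖ ^ 2 = q →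
      ‖(inner ℂ d₂ y : ℂ)‖ ^ 2 ≤ ‖(inner ℂ d₂ z : ℂ)‖ ^ 2 := by
  have hr0 : 0 ≤ r := hr ▸ (norm_nonneg _)
  have hr2 : 0 < 1 - r ^ 2 := by nlinarith
  set s := Real.sqrt q with hs_def
  set t := Real.sqrt (1 - q) with ht_def
  set b := Real.sqrt (1 - r ^ 2) with hb_def
  have hs : s ^ 2 = q := Real.sq_sqrt hq0
  have ht : t ^ 2 = 1 - q := Real.sq_sqrt (by linarith)
  have hb : b ^ 2 = 1 - r ^ 2 := Real.sq_sqrt (by linarith)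
  have hs0 : 0 ≤ s := Real.sqrt_nonneg _
  have ht0 : 0 ≤ t := Real.sqrt_nonneg _
  have hb0 : 0 ≤ b := Real.sqrt_nonneg _
  have hc₂0 : 0 ≤ c₂ := hc₂ ▸ Real.sqrt_nonneg _
  have hc₂sq : c₂ ^ 2 * (1 - r ^ 2) = 1 - q := by
    have h : c₂ ^ 2 = (1 - q) / (1 - r ^ 2) := by
      rw [hc₂]; exact Real.sq_sqrt (div_nonneg (by linarith) hr2.le)
    rw [h]; field_simp
  have hKc : (1 - r ^ 2) * c₂ = b * t := by
    refine (pow_left_inj₀ (by positivity) (by positivity) two_ne_zero).mp ?_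
    have h : ((1 - r ^ 2) * c₂) ^ 2 = (1 - r ^ 2) * (c₂ ^ 2 * (1 - r ^ 2)) := by ring
    rw [h, hc₂sq, mul_pow, hb, ht]
  -- complex exponential facts
  set E : ℂ := Complex.exp (Complex.I * (φ : ℂ)) with hE_def
  set E' : ℂ := Complex.exp (-(Complex.I * (φ : ℂ))) with hE'_def
  have hEE' : E * E' = 1 := by
    rw [hE_def, hE'_def, ← Complex.exp_add, add_neg_cancel, Complex.exp_zero]
  have hconjE : (starRingEnd ℂ) E = E' := by
    rw [hE_def, hE'_def, ← Complex.exp_conj]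
    congr 1
    simp [Complex.conj_I]
  have hconjE' : (starRingEnd ℂ) E' = E := by
    rw [← hconjE, Complex.conj_conj]
  have habsE' : ‖E'‖ = 1 := by
    rw [hE'_def, Complex.norm_exp]; simp
  have hc₁' : c₁ = ((s - r * c₂ : ℝ) : ℂ) * E' := by
    rw [hc₁]
    have h : Complex.exp (Complex.I * ((Real.pi - φ : ℝ) : ℂ)) = -E' := by
      rw [hE'_def]
      push_cast
      rw [show Complex.I * ((Real.pi : ℂ) - (φ : ℂ))
          = (Real.pi : ℂ) * Complex.I + -(Complex.I * (φ:ℂ)) by ring]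
      rw [Complex.exp_add, Complex.exp_pi_mul_I]
      ring
    rw [h]; push_cast; ring
  have hd₁d₁ : (inner ℂ d₁ d₁ : ℂ) = 1 := by
    rw [inner_self_eq_norm_sq_to_K, hd₁]; norm_num
  have hd₂d₂ : (inner ℂ d₂ d₂ : ℂ) = 1 := by
    rw [inner_self_eq_norm_sq_to_K, hd₂]; norm_num
  have hd₁d₂ : (inner ℂ d₁ d₂ : ℂ) = (r : ℂ) * E' := by
    rw [← inner_conj_symm, hφ, map_mul, hconjE, Complex.conj_ofReal]
  -- inner d₁ z
  have h1 : (inner ℂ d₁ z : ℂ) = (s : ℂ) * E' := by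
    rw [hzdef, inner_add_right, inner_smul_right, inner_smul_right, hd₁d₁, hd₁d₂, hc₁']
    push_cast; ring
  have habs1 : ‖(inner ℂ d₁ z : ℂ)‖ ^ 2 = q := by
    rw [h1, norm_mul, habsE', Complex.norm_real, Real.norm_eq_abs, _root_.abs_of_nonneg hs0, mul_one, hs]
  -- inner d₂ z
  have h2 : (inner ℂ d₂ z : ℂ) = ((r * s + b * t : ℝ) : ℂ) := by
    rw [hzdef, inner_add_right, inner_smul_right, inner_smul_right, hd₂d₂, hφ, hc₁', ← hKc]
    push_cast
    linear_combination ((s:ℂ) - r*c₂) * r * hEE'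
  have habs2 : ‖(inner ℂ d₂ z : ℂ)‖ = r * s + b * t := by
    rw [h2, Complex.norm_real, Real.norm_eq_abs, _root_.abs_of_nonneg (by positivity)]
  -- norm of z
  have hE'n : ‖E'‖ = 1 := by exact habsE'
  have hnc₁ : ‖c₁‖ = |s - r * c₂| := by
    rw [hc₁', norm_mul, hE'n, mul_one, Complex.norm_real, Real.norm_eq_abs]
  have hcross : (inner ℂ (c₁ • d₁) ((c₂ : ℂ) • d₂) : ℂ) = ((r * c₂ * (s - r * c₂) : ℝ) : ℂ) := by
    rw [inner_smul_left, inner_smul_right, hd₁d₂, hc₁', map_mul, hconjE', Complex.conj_ofReal]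
    push_cast
    linear_combination ((s:ℂ) - r*c₂) * c₂ * r * hEE'
  have hnz : ‖z‖ = 1 := by
    have hsq : ‖z‖ ^ 2 = 1 := by
      rw [hzdef, norm_add_sq (𝕜 := ℂ), hcross, RCLike.re_to_complex, Complex.ofReal_re,
        norm_smul, norm_smul, hnc₁, hd₁, hd₂, Complex.norm_real, Real.norm_eq_abs,
        mul_one, mul_one, _root_.sq_abs, _root_.sq_abs]
      linear_combination hs + hc₂sq
    exact (pow_left_inj₀ (norm_nonneg z) zero_le_one two_ne_zero).mp (by rw [hsq, one_pow])
  refine ⟨hnz, habs1, ?_, ?_⟩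
  · rw [habs2, Real.sqrt_mul hr2.le, ← hs_def, ← hb_def]
    have h : (r*s+b*t)^2 + (r*t-b*s)^2 = (r^2+b^2)*(s^2+t^2) := by ring
    rw [hs, ht, hb] at h
    have h1 : (r^2+(1-r^2))*(q+(1-q)) = 1 := by ring
    linarith
  · intro y hy hqy
    set β : ℂ := (inner ℂ d₁ y : ℂ) with hβ_def
    have habsβ : ‖β‖ = s :=
      (pow_left_inj₀ (norm_nonneg β) hs0 two_ne_zero).mp (by rw [hqy, hs])
    set v : EuclideanSpace ℂ (Fin N) := y - β • d₁ with hv_def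
    set w : EuclideanSpace ℂ (Fin N) := d₂ - (inner ℂ d₁ d₂ : ℂ) • d₁ with hw_def
    have key : (inner ℂ d₂ y : ℂ) = (inner ℂ d₂ d₁ : ℂ) * β + (inner ℂ w v : ℂ) := by
      simp only [hw_def, hv_def, inner_sub_left, inner_sub_right, inner_smul_left,
        inner_smul_right, inner_conj_symm, hd₁d₁, ← hβ_def]
      ring
    have hv : ‖v‖ ^ 2 = 1 - q := by
      have hiy : (inner ℂ y (β • d₁) : ℂ) = ((q : ℝ) : ℂ) := by
        rw [inner_smul_right, ← inner_conj_symm y d₁, ← hβ_def, Complex.mul_conj]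
        rw [← Complex.sq_norm, hqy]
      rw [hv_def, norm_sub_sq (𝕜 := ℂ), hiy, RCLike.re_to_complex, Complex.ofReal_re,
        norm_smul, hd₁, hy, mul_one, habsβ]
      linear_combination hs
    have hw : ‖w‖ ^ 2 = 1 - r ^ 2 := by
      have hiw : (inner ℂ d₂ ((inner ℂ d₁ d₂ : ℂ) • d₁) : ℂ) = ((r^2 : ℝ) : ℂ) := by
        rw [inner_smul_right, hd₁d₂, hφ]
        push_cast
        linear_combination (r:ℂ)^2 * hEE'
      rw [hw_def, norm_sub_sq (𝕜 := ℂ), hiw, RCLike.re_to_complex, Complex.ofReal_re,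
        norm_smul, hd₁, hd₂, mul_one, hd₁d₂, norm_mul, habsE',
        Complex.norm_real, Real.norm_eq_abs, _root_.abs_of_nonneg hr0]
      ring
    have hvn : ‖v‖ = t :=
      (pow_left_inj₀ (norm_nonneg v) ht0 two_ne_zero).mp (by rw [hv, ht])
    have hwn : ‖w‖ = b :=
      (pow_left_inj₀ (norm_nonneg w) hb0 two_ne_zero).mp (by rw [hw, hb])
    have hcs : ‖(inner ℂ w v : ℂ)‖ ≤ b * t := by
      have h := norm_inner_le_norm (𝕜 := ℂ) w v
      rwa [hvn, hwn] at h
    have habsy : ‖(inner ℂ d₂ y : ℂ)‖ ≤ r * s + b * t := by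
      calc ‖(inner ℂ d₂ y : ℂ)‖
          ≤ ‖(inner ℂ d₂ d₁ : ℂ) * β‖ + ‖(inner ℂ w v : ℂ)‖ := by
            rw [key]; exact norm_add_le _ _
        _ = r * s + ‖(inner ℂ w v : ℂ)‖ := by
            rw [norm_mul, ← hr, habsβ]
        _ ≤ r * s + b * t := by linarith
    rw [habs2]
    exact pow_le_pow_left₀ (norm_nonneg _) habsy 2
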